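/- Let (A,[·,·],α) be a multiplicative Hom-Leibniz algebra over a field K. Define linear maps α⊗L, α⊗R: A → End(A⊗A) by (α⊗L)(x)(a⊗b) = α(a)⊗[x,b] and (α⊗R)(x)(a⊗b) = α(a)⊗[b,x], for x,a,b ∈ A. Then (α⊗L, α⊗R, α⊗α, A⊗A) is a bimodule of (A,[·,·],α). -/

import Mathlib

open TensorProduct

/-- A bimodule `(l, r, β, V)` of a Hom-Leibniz algebra `(A, br, α)`. -/
def HomLeibnizBimodule {K A V : Type*} [Field K] [AddCommGroup A] [Module K A]
    [AddCommGroup V] [Module K V]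
    (br : A →ₗ[K] A →ₗ[K] A) (α : A →ₗ[K] A)
    (l r : A →ₗ[K] V →ₗ[K] V) (β : V →ₗ[K] V) : Prop :=
  (∀ x y v, l (α x) (l y v) = l (br x y) (β v) + l (α y) (l x v)) ∧
  (∀ x y v, l (α x) (r y v) = r (α y) (l x v) + r (br x y) (β v)) ∧
  (∀ x y v, r (br x y) (β v) = r (α y) (r x v) + l (α x) (r y v)) ∧
  (∀ x v, β (l x v) = l (α x) (β v)) ∧
  (∀ x v, β (r x v) = r (α x) (β v))

/-- for a multiplicative Hom-Leibniz algebra `(A, br, α)`,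
the maps `(α⊗L)(x)(a⊗b) = α(a)⊗[x,b]` and `(α⊗R)(x)(a⊗b) = α(a)⊗[b,x]`
make `(α⊗L, α⊗R, α⊗α, A⊗A)` a bimodule of `A`. -/
theorem tensor_bimodule_of_multiplicative_homLeibniz
    {K A : Type*} [Field K] [AddCommGroup A] [Module K A]
    (br : A →ₗ[K] A →ₗ[K] A) (α : A →ₗ[K] A)
    (hA : ∀ x y z : A, br (α x) (br y z) = br (br x y) (α z) + br (α y) (br x z))
    (hmul : ∀ x y : A, α (br x y) = br (α x) (α y)) :
    HomLeibnizBimodule br α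
      ((TensorProduct.mapBilinear (RingHom.id K) A A A A α).comp br)
      ((TensorProduct.mapBilinear (RingHom.id K) A A A A α).comp br.flip)
      (TensorProduct.map α α) := by
  refine ⟨?_, ?_, ?_, ?_, ?_⟩
  · intro x y v
    induction v using TensorProduct.induction_on with
    | zero => simp
    | tmul a b =>
        simp only [LinearMap.comp_apply, TensorProduct.mapBilinear_apply,
          TensorProduct.map_tmul, LinearMap.flip_apply, hA x y b, tmul_add]
    | add u w hu hw =>
        simp only [map_add, hu, hw]; abel
  · intro x y v
    induction v using TensorProduct.induction_on with
    | zero => simp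
    | tmul a b =>
        simp only [LinearMap.comp_apply, TensorProduct.mapBilinear_apply,
          TensorProduct.map_tmul, LinearMap.flip_apply, hA x b y, tmul_add]
    | add u w hu hw =>
        simp only [map_add, hu, hw]; abel
  · intro x y v
    induction v using TensorProduct.induction_on with
    | zero => simp
    | tmul a b =>
        simp only [LinearMap.comp_apply, TensorProduct.mapBilinear_apply,
          TensorProduct.map_tmul, LinearMap.flip_apply, hA b x y, tmul_add]
    | add u w hu hw =>
        simp only [map_add, hu, hw]; abel
  · intro x v
    induction v using TensorProduct.induction_on with
    | zero => simp
    | tmul a b =>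
        simp only [LinearMap.comp_apply, TensorProduct.mapBilinear_apply,
          TensorProduct.map_tmul, hmul]
    | add u w hu hw =>
        simp only [map_add, hu, hw]
  · intro x v
    induction v using TensorProduct.induction_on with
    | zero => simp
    | tmul a b =>
        simp only [LinearMap.comp_apply, TensorProduct.mapBilinear_apply,
          TensorProduct.map_tmul, LinearMap.flip_apply, hmul]
    | add u w hu hw =>
        simp only [map_add, hu, hw]
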